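/- If ‖S(z, tλ)‖₂ > tμ, then the vector β̂ = (1 − tμ/‖S(z, tλ)‖₂) · S(z, tλ) is the unique global minimizer of f. -/

import Mathlib

open Finset

/-- if `‖S(z, tλ)‖₂ > tμ`, the vector
`β̂ = (1 − tμ/‖S(z, tλ)‖₂) S(z, tλ)` is the unique global minimizer of
`f(β) = (1/(2t))‖β − z‖₂² + λ‖β‖₁ + μ‖β‖₂`. -/
theorem soft_threshold_group_update_unique_minimizer
    (d : ℕ) (z : EuclideanSpace ℝ (Fin d)) (t lam mu : ℝ)
    (ht : 0 < t) (hlam : 0 ≤ lam) (hmu : 0 ≤ mu)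
    (f : EuclideanSpace ℝ (Fin d) → ℝ)
    (hf : ∀ β, f β = 1 / (2 * t) * ‖β - z‖ ^ 2 + lam * ∑ i, |β i| + mu * ‖β‖)
    (soft : EuclideanSpace ℝ (Fin d))
    (hsoft : ∀ i, soft i = Real.sign (z i) * max (|z i| - t * lam) 0)
    (hbig : t * mu < ‖soft‖) :
    (∀ β, f ((1 - t * mu / ‖soft‖) • soft) ≤ f β) ∧
    (∀ β, (∀ β', f β ≤ f β') → β = (1 - t * mu / ‖soft‖) • soft) := by
  have hn0 : (0:ℝ) < ‖soft‖ := lt_of_le_of_lt (mul_nonneg ht.le hmu) hbig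
  set n : ℝ := ‖soft‖ with hn
  set c : ℝ := 1 - t * mu / n with hc
  have hc0 : 0 ≤ c := by
    have : t * mu / n ≤ 1 := (div_le_one hn0).mpr hbig.le
    simp only [hc]; linarith
  set b : EuclideanSpace ℝ (Fin d) := c • soft with hb
  have hts : 0 ≤ t * lam := mul_nonneg ht.le hlam
  have htm : 0 ≤ t * mu := mul_nonneg ht.le hmu
  -- componentwise facts
  have comp : ∀ i, |z i - soft i| ≤ t * lam ∧
      (z i - soft i) * soft i = t * lam * |soft i| := by
    intro i
    rw [hsoft i]
    rcases le_or_gt (|z i|) (t * lam) with h | h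
    · have hm : max (|z i| - t * lam) 0 = 0 := max_eq_right (by linarith)
      rw [hm]
      constructor
      · simpa using h
      · simp
    · have hm : max (|z i| - t * lam) 0 = |z i| - t * lam :=
        max_eq_left (by linarith)
      rw [hm]
      rcases lt_trichotomy (z i) 0 with hz | hz | hz
      · rw [Real.sign_of_neg hz, abs_of_neg hz]
        constructor
        · rw [show z i - -1 * (-z i - t * lam) = -(t * lam) by ring, abs_neg,
            abs_of_nonneg hts]
        · rw [abs_of_neg hz] at h
          rw [abs_of_neg (show -1 * (-z i - t * lam) < 0 by nlinarith)]
          ring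
      · exfalso; rw [hz] at h; simp at h; linarith
      · rw [Real.sign_of_pos hz, abs_of_pos hz]
        constructor
        · rw [show z i - 1 * (z i - t * lam) = t * lam by ring,
            abs_of_nonneg hts]
        · rw [abs_of_pos hz] at h
          rw [abs_of_pos (show (0:ℝ) < 1 * (z i - t * lam) by nlinarith)]
          ring
  -- norm of b
  have hnb : ‖b‖ = c * n := by
    rw [hb, norm_smul, Real.norm_eq_abs, abs_of_nonneg hc0]
  have hbi : ∀ i, |b i| = c * |soft i| := by
    intro i
    have : b i = c * soft i := rfl
    rw [this, abs_mul, abs_of_nonneg hc0]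
  -- subgradient inequality
  have key : ∀ β : EuclideanSpace ℝ (Fin d),
      (inner ℝ (z - b) (β - b) : ℝ) ≤
        t * lam * (∑ i, |β i|) - t * lam * (∑ i, |b i|)
        + t * mu * ‖β‖ - t * mu * ‖b‖ := by
    intro β
    have hdecomp : z - b = (z - soft) + (t * mu / n) • soft := by
      rw [hb]
      have : (t * mu / n) • soft = (1 - c) • soft := by
        rw [hc]; ring_nf
      rw [this]
      module
    rw [hdecomp, inner_add_left]
    have h1 : (inner ℝ (z - soft) (β - b) : ℝ) ≤
        t * lam * (∑ i, |β i|) - t * lam * (∑ i, |b i|) := by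
      rw [inner_sub_right]
      have e1 : (inner ℝ (z - soft) β : ℝ) ≤ t * lam * ∑ i, |β i| := by
        rw [PiLp.inner_apply]
        rw [Finset.mul_sum]
        apply Finset.sum_le_sum
        intro i _
        simp only [RCLike.inner_apply, conj_trivial, PiLp.sub_apply]
        rw [mul_comm]
        calc (z i - soft i) * β i ≤ |(z i - soft i) * β i| := le_abs_self _
          _ = |z i - soft i| * |β i| := abs_mul _ _
          _ ≤ t * lam * |β i| := by
              apply mul_le_mul_of_nonneg_right (comp i).1 (abs_nonneg _)
      have e2 : (inner ℝ (z - soft) b : ℝ) = t * lam * ∑ i, |b i| := by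
        rw [PiLp.inner_apply, Finset.mul_sum]
        apply Finset.sum_congr rfl
        intro i _
        simp only [RCLike.inner_apply, conj_trivial, PiLp.sub_apply]
        have := (comp i).2
        rw [mul_comm]
        show (z i - soft i) * (c * soft i) = t * lam * |c * soft i|
        rw [abs_mul, abs_of_nonneg hc0]
        nlinarith [this]
      rw [e2]; linarith
    have h2 : (inner ℝ ((t * mu / n) • soft) (β - b) : ℝ) ≤
        t * mu * ‖β‖ - t * mu * ‖b‖ := by
      rw [real_inner_smul_left, inner_sub_right]
      have e1 : (inner ℝ soft β : ℝ) ≤ n * ‖β‖ := real_inner_le_norm soft β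
      have e2 : (inner ℝ soft b : ℝ) = c * n ^ 2 := by
        rw [hb, real_inner_smul_right, real_inner_self_eq_norm_sq]
      rw [e2, hnb]
      have hne : n ≠ 0 := ne_of_gt hn0
      have : t * mu / n * (inner ℝ soft β - c * n ^ 2) ≤
          t * mu / n * (n * ‖β‖ - c * n ^ 2) := by
        apply mul_le_mul_of_nonneg_left _ (div_nonneg htm hn0.le)
        linarith
      calc t * mu / n * ((inner ℝ soft β : ℝ) - c * n ^ 2)
          ≤ t * mu / n * (n * ‖β‖ - c * n ^ 2) := this
        _ = t * mu * ‖β‖ - t * mu * (c * n) := by field_simp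
    linarith
  -- growth inequality
  have grow : ∀ β, f b + 1 / (2 * t) * ‖β - b‖ ^ 2 ≤ f β := by
    intro β
    rw [hf, hf]
    have hexp : ‖β - z‖ ^ 2 = ‖β - b‖ ^ 2 + 2 * (inner ℝ (β - b) (b - z) : ℝ)
        + ‖b - z‖ ^ 2 := by
      have : β - z = (β - b) + (b - z) := by abel
      rw [this, norm_add_sq_real]
    have hinn : (inner ℝ (β - b) (b - z) : ℝ) = -(inner ℝ (z - b) (β - b) : ℝ) := by
      rw [show b - z = -(z - b) by abel, inner_neg_right, real_inner_comm]
    have hk := key β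
    rw [hexp, hinn]
    have e : 1 / (2*t) * (‖β - b‖^2 + 2 * -(inner ℝ (z-b) (β-b):ℝ) + ‖b - z‖^2)
        = 1/(2*t) * ‖β - b‖^2 - 1/t * (inner ℝ (z-b) (β-b):ℝ)
          + 1/(2*t) * ‖b - z‖^2 := by
      field_simp; ring
    rw [e]
    have hk2 := mul_le_mul_of_nonneg_left hk (show (0:ℝ) ≤ 1/t by positivity)
    have heq : 1/t * (t * lam * (∑ i, |β i|) - t * lam * (∑ i, |b i|)
        + t * mu * ‖β‖ - t * mu * ‖b‖)
        = lam * (∑ i, |β i|) - lam * (∑ i, |b i|) + mu * ‖β‖ - mu * ‖b‖ := by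
      field_simp
    rw [heq] at hk2
    linarith
  constructor
  · intro β
    have h := grow β
    have h0 : 0 ≤ 1 / (2 * t) * ‖β - b‖ ^ 2 := by positivity
    linarith
  · intro β hβ
    have h1 := hβ b
    have h2 := grow β
    have h0 : 0 ≤ 1 / (2 * t) * ‖β - b‖ ^ 2 := by positivity
    have hpos : 0 < 1 / (2 * t) := by positivity
    have hz2 : 1 / (2 * t) * ‖β - b‖ ^ 2 = 0 := le_antisymm (by linarith) h0
    have hsq : ‖β - b‖ ^ 2 = 0 := by
      rcases mul_eq_zero.mp hz2 with h | h
      · exact absurd h (ne_of_gt hpos)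
      · exact h
    have hnrm : ‖β - b‖ = 0 := by
      exact pow_eq_zero_iff (by norm_num) |>.mp hsq
    exact sub_eq_zero.mp (norm_eq_zero.mp hnrm)
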